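/- Let (W_n) be a balanced sequence of random vectors in ℝⁿ with w_n = ‖W_n‖ and m_n = √E[w_n²]. Then Var(w_n) = m_n² - E[w_n]² → 0 as n → ∞. -/

import Mathlib

open MeasureTheory

/-- Cauchy–Schwarz-type inequality: `(∫ f)² ≤ ∫ f²` for a probability measure. -/
lemma sq_integral_le_integral_sq {Ω : Type*} [MeasurableSpace Ω] (μ : Measure Ω)
    [IsProbabilityMeasure μ] (f : Ω → ℝ) (hf : Integrable f μ)
    (hf2 : Integrable (fun ω => f ω ^ 2) μ) :
    (∫ ω, f ω ∂μ) ^ 2 ≤ ∫ ω, f ω ^ 2 ∂μ := by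
  set a := ∫ ω, f ω ∂μ with ha
  have h0 : 0 ≤ ∫ ω, (f ω - a) ^ 2 ∂μ := integral_nonneg fun ω => sq_nonneg _
  have he : ∫ ω, (f ω - a) ^ 2 ∂μ = (∫ ω, f ω ^ 2 ∂μ) - a ^ 2 := by
    have e : (fun ω => (f ω - a) ^ 2)
        = fun ω => f ω ^ 2 - ((2 * a) * f ω - a ^ 2) := by
      funext ω; ring
    have hg : Integrable (fun ω => (2 * a) * f ω - a ^ 2) μ :=
      (hf.const_mul _).sub (integrable_const _)
    have hg1 : Integrable (fun ω => (2 * a) * f ω) μ := hf.const_mul _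
    rw [e, integral_sub hf2 hg, integral_sub hg1 (integrable_const _),
      integral_const_mul, integral_const]
    simp
    ring
  linarith

set_option maxHeartbeats 1000000 in
/-- For a balanced sequence of random vectors `W_n` in `ℝⁿ`,
`Var(w_n) = m_n² - E[w_n]² → 0` as `n → ∞`. -/
theorem balanced_variance_of_norm_tendsto_zero
    {Ω : Type*} [MeasurableSpace Ω] (μ : Measure Ω) [IsProbabilityMeasure μ]
    (W : (n : ℕ) → Ω → EuclideanSpace ℝ (Fin n))
    (w : ℕ → Ω → ℝ) (hw : ∀ n ω, w n ω = ‖W n ω‖)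
    (hint : ∀ n, ∀ k ≤ 8, Integrable (fun ω => (w n ω)^k) μ)
    (m : ℕ → ℝ) (hm : ∀ n, m n = Real.sqrt (∫ ω, (w n ω)^2 ∂μ))
    (b C : ℝ) (hb : 0 < b)
    (hbm : ∀ n, 1 ≤ n → b < m n)
    (hmC : ∀ n, 1 ≤ n → m n ≤ C)
    (hmu3 : ∀ n : ℕ, 1 ≤ n → |(n:ℝ)^2 * ∫ ω, ((w n ω)^2 - (m n)^2)^3 ∂μ| ≤ C)
    (hmu4 : ∀ n : ℕ, 1 ≤ n → (n:ℝ)^2 * ∫ ω, ((w n ω)^2 - (m n)^2)^4 ∂μ ≤ C) :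
    Filter.Tendsto (fun n => (m n)^2 - (∫ ω, w n ω ∂μ)^2)
      Filter.atTop (nhds 0) := by
  have hC : 0 < C := hb.trans ((hbm 1 le_rfl).trans_le (hmC 1 le_rfl))
  set K := C * Real.sqrt C / b ^ 3 with hK
  have key : ∀ n : ℕ, 1 ≤ n →
      0 ≤ (m n)^2 - (∫ ω, w n ω ∂μ)^2 ∧
      (m n)^2 - (∫ ω, w n ω ∂μ)^2 ≤ K / n := by
    intro n hn
    have hn0 : (0:ℝ) < (n:ℝ) := by exact_mod_cast hn
    set mn := m n with hmn
    set E := ∫ ω, w n ω ∂μ with hE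
    have hw0 : ∀ ω, 0 ≤ w n ω := fun ω => (hw n ω) ▸ norm_nonneg _
    have h1 : Integrable (w n) μ := by
      have := hint n 1 (by norm_num); simpa using this
    have h2 : Integrable (fun ω => (w n ω)^2) μ := hint n 2 (by norm_num)
    have h4 : Integrable (fun ω => (w n ω)^4) μ := hint n 4 (by norm_num)
    have h6 : Integrable (fun ω => (w n ω)^6) μ := hint n 6 (by norm_num)
    have h8 : Integrable (fun ω => (w n ω)^8) μ := hint n 8 le_rfl
    have hbmn : b < mn := hbm n hn
    have hmnC : mn ≤ C := hmC n hn
    have hmn0 : 0 < mn := hb.trans hbmn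
    have hm2 : mn ^ 2 = ∫ ω, (w n ω)^2 ∂μ := by
      rw [hmn, hm n]
      exact Real.sq_sqrt (integral_nonneg fun ω => sq_nonneg _)
    have hE0 : 0 ≤ E := integral_nonneg hw0
    -- the centered second moment of w
    have hSint : Integrable (fun ω => (mn - w n ω)^2) μ := by
      have e : (fun ω => (mn - w n ω)^2)
          = fun ω => ((w n ω)^2 - (2*mn) * (w n ω)) + mn^2 := by
        funext ω; ring
      rw [e]; exact (h2.sub (h1.const_mul _)).add (integrable_const _)
    set S := ∫ ω, (mn - w n ω)^2 ∂μ with hSdef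
    have hS : S = 2 * mn * (mn - E) := by
      have e : (fun ω => (mn - w n ω)^2)
          = fun ω => ((w n ω)^2 - (2*mn) * (w n ω)) + mn^2 := by
        funext ω; ring
      have hg : Integrable (fun ω => (w n ω)^2 - (2*mn) * (w n ω)) μ :=
        h2.sub (h1.const_mul _)
      have hg1 : Integrable (fun ω => (2*mn) * (w n ω)) μ := h1.const_mul _
      rw [hSdef, e, integral_add hg (integrable_const _),
        integral_sub h2 hg1, integral_const_mul, integral_const, ← hm2]
      simp
      ring
    have hSnn : 0 ≤ S := integral_nonneg fun ω => sq_nonneg _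
    -- integrability of powers of (w² - mn²)
    have hI4int : Integrable (fun ω => ((w n ω)^2 - mn^2)^2) μ := by
      have e : (fun ω => ((w n ω)^2 - mn^2)^2)
          = fun ω => ((w n ω)^4 - (2*mn^2) * (w n ω)^2) + mn^4 := by
        funext ω; ring
      rw [e]; exact (h4.sub (h2.const_mul _)).add (integrable_const _)
    have hI8int : Integrable (fun ω => ((w n ω)^2 - mn^2)^4) μ := by
      have e : (fun ω => ((w n ω)^2 - mn^2)^4)
          = fun ω => ((((w n ω)^8 - (4*mn^2) * (w n ω)^6)
              + (6*mn^4) * (w n ω)^4) - (4*mn^6) * (w n ω)^2) + mn^8 := by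
        funext ω; ring
      rw [e]
      exact ((((h8.sub (h6.const_mul _)).add (h4.const_mul _)).sub
        (h2.const_mul _)).add (integrable_const _))
    set I4 := ∫ ω, ((w n ω)^2 - mn^2)^2 ∂μ with hI4def
    have hI4nn : 0 ≤ I4 := integral_nonneg fun ω => sq_nonneg _
    -- pointwise inequality
    have hptw : ∀ ω, b^2 * (mn - w n ω)^2 ≤ ((w n ω)^2 - mn^2)^2 := by
      intro ω
      have h0 := hw0 ω
      have hpos : 0 ≤ (mn + w n ω)^2 - b^2 := by nlinarith
      nlinarith [mul_nonneg (sq_nonneg (mn - w n ω)) hpos]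
    have hSb : b^2 * S ≤ I4 := by
      have hg : Integrable (fun ω => b^2 * (mn - w n ω)^2) μ := hSint.const_mul _
      calc b^2 * S = ∫ ω, b^2 * (mn - w n ω)^2 ∂μ := (integral_const_mul _ _).symm
        _ ≤ I4 := integral_mono hg hI4int hptw
    -- fourth moment bound
    have hI4sq : I4^2 ≤ ∫ ω, ((w n ω)^2 - mn^2)^4 ∂μ := by
      have := sq_integral_le_integral_sq μ (fun ω => ((w n ω)^2 - mn^2)^2)
        hI4int (by
          have e : (fun ω => (((w n ω)^2 - mn^2)^2)^2)
              = fun ω => ((w n ω)^2 - mn^2)^4 := by funext ω; ring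
          rw [e]; exact hI8int)
      calc I4^2 = (∫ ω, ((w n ω)^2 - mn^2)^2 ∂μ)^2 := rfl
        _ ≤ ∫ ω, (((w n ω)^2 - mn^2)^2)^2 ∂μ := this
        _ = ∫ ω, ((w n ω)^2 - mn^2)^4 ∂μ := by
            congr 1; funext ω; ring
    have hmu : ∫ ω, ((w n ω)^2 - mn^2)^4 ∂μ ≤ C / (n:ℝ)^2 := by
      rw [le_div_iff₀ (by positivity)]
      have := hmu4 n hn
      nlinarith [this]
    have hI4le : I4 * n ≤ Real.sqrt C := by
      have h1' : I4^2 ≤ C / (n:ℝ)^2 := hI4sq.trans hmu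
      have h2' : I4 ≤ Real.sqrt (C / (n:ℝ)^2) := by
        rw [← Real.sqrt_sq hI4nn]
        exact Real.sqrt_le_sqrt h1'
      have h3' : Real.sqrt (C / (n:ℝ)^2) = Real.sqrt C / n := by
        rw [Real.sqrt_div hC.le, Real.sqrt_sq hn0.le]
      rw [h3'] at h2'
      calc I4 * n ≤ (Real.sqrt C / n) * n := by
            exact mul_le_mul_of_nonneg_right h2' hn0.le
        _ = Real.sqrt C := by field_simp
    have hmE : E ≤ mn := by nlinarith [hSnn, hS, hmn0]
    constructor
    · nlinarith [hE0, hmE]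
    · rw [hK, div_div, le_div_iff₀ (by positivity : (0:ℝ) < b^3 * n)]
      have h2mn : (0:ℝ) < 2 * mn := by linarith
      rw [← mul_le_mul_iff_of_pos_right h2mn]
      have lhs_eq : (mn^2 - E^2) * (b^3 * (n:ℝ)) * (2 * mn)
          = S * (mn + E) * (n:ℝ) * b^3 := by rw [hS]; ring
      rw [lhs_eq]
      have hstep1 : S * (n:ℝ) * b^2 ≤ Real.sqrt C := by
        calc S * (n:ℝ) * b^2 = (b^2 * S) * (n:ℝ) := by ring
          _ ≤ I4 * n := mul_le_mul_of_nonneg_right hSb hn0.le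
          _ ≤ Real.sqrt C := hI4le
      have hME : mn + E ≤ 2 * C := by linarith
      calc S * (mn + E) * (n:ℝ) * b^3
          ≤ S * (2*C) * (n:ℝ) * b^3 := by
            apply mul_le_mul_of_nonneg_right _ (by positivity)
            apply mul_le_mul_of_nonneg_right _ hn0.le
            exact mul_le_mul_of_nonneg_left hME hSnn
        _ = 2*C*b*(S * (n:ℝ) * b^2) := by ring
        _ ≤ 2*C*b*(Real.sqrt C) := by
            exact mul_le_mul_of_nonneg_left hstep1 (by positivity)
        _ = (2*C*Real.sqrt C) * b := by ring
        _ ≤ (2*C*Real.sqrt C) * mn := by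
            exact mul_le_mul_of_nonneg_left hbmn.le (by positivity)
        _ = C * Real.sqrt C * (2 * mn) := by ring
  have hKt : Filter.Tendsto (fun n : ℕ => K / (n:ℝ)) Filter.atTop (nhds 0) :=
    tendsto_const_div_atTop_nhds_zero_nat K
  refine tendsto_of_tendsto_of_tendsto_of_le_of_le' tendsto_const_nhds hKt ?_ ?_
  · filter_upwards [Filter.eventually_ge_atTop 1] with n hn
    exact (key n hn).1
  · filter_upwards [Filter.eventually_ge_atTop 1] with n hn
    exact (key n hn).2
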